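/- Let A, B be Hermitian positive definite and let C be the 2n×2n block matrix with blocks [[0, B],[A^{-1}, 0]]. Then sign(C) = [[0, A#B],[(A#B)^{-1}, 0]], where sign(C) = C (C^2)^{-1/2}. -/

import Mathlib

open Matrix ComplexOrder

/-- The positive semidefinite square root of a positive semidefinite matrix (as defined in
the older Mathlib, where it was `Matrix.PosSemidef.sqrt`). -/
noncomputable def Matrix.PosSemidef.sqrt {n : Type*} [Fintype n] [DecidableEq n]
    {A : Matrix n n ℂ} (hA : A.PosSemidef) : Matrix n n ℂ :=
  hA.isHermitian.eigenvectorUnitary.1 * diagonal ((↑) ∘ (√·) ∘ hA.isHermitian.eigenvalues) *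
    (star hA.isHermitian.eigenvectorUnitary : Matrix n n ℂ)

lemma Matrix.PosSemidef.posSemidef_sqrt {n : Type*} [Fintype n] [DecidableEq n]
    {A : Matrix n n ℂ} (hA : A.PosSemidef) : hA.sqrt.PosSemidef := by
  unfold Matrix.PosSemidef.sqrt
  have := (posSemidef_diagonal_iff.mpr (fun i => (by
    simp only [Function.comp_apply]; exact_mod_cast Real.sqrt_nonneg _) :
      ∀ i, (0 : ℂ) ≤ ((↑) ∘ (√·) ∘ hA.isHermitian.eigenvalues) i)).mul_mul_conjTranspose_same
    (hA.isHermitian.eigenvectorUnitary.1)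
  simpa [Matrix.star_eq_conjTranspose] using this

section Helpers

open Polynomial

variable {m : Type*} [Fintype m] [DecidableEq m]

private lemma my_eval_charpoly (M : Matrix m m ℂ) (μ : ℂ) :
    M.charpoly.eval μ = (μ • (1 : Matrix m m ℂ) - M).det := by
  rw [Matrix.charpoly, ← Polynomial.coe_evalRingHom, RingHom.map_det]
  congr 1
  ext i j
  by_cases h : i = j
  · subst h
    simp [Matrix.charmatrix_apply_eq, Matrix.one_apply_eq]
  · simp [Matrix.charmatrix_apply_ne _ _ _ h, Matrix.one_apply_ne h]

private lemma my_mem_spectrum_of_eval {M : Matrix m m ℂ} {μ : ℂ}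
    (h : M.charpoly.eval μ = 0) : μ ∈ spectrum ℂ M := by
  rw [spectrum.mem_iff, Algebra.algebraMap_eq_smul_one]
  rw [my_eval_charpoly] at h
  rw [Matrix.isUnit_iff_isUnit_det, isUnit_iff_ne_zero]
  simp [h]

/-- Uniqueness of the square root with spectrum in the open right half-plane. -/
private lemma my_sqrt_unique [Nonempty m] {Y Z : Matrix m m ℂ} (h : Y ^ 2 = Z ^ 2)
    (hY : ∀ z ∈ spectrum ℂ Y, 0 < z.re) (hZ : ∀ z ∈ spectrum ℂ Z, 0 < z.re) :
    Y = Z := by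
  set X := Y - Z with hX
  have hYX : Y * X = X * (-Z) := by
    have h0 : Y * X + X * Z = Y ^ 2 - Z ^ 2 := by rw [hX]; noncomm_ring
    rw [h, sub_self] at h0
    rw [mul_neg, eq_neg_iff_add_eq_zero.symm.symm]
    linear_combination (norm := noncomm_ring) h0
  have hpow : ∀ k : ℕ, Y ^ k * X = X * (-Z) ^ k := by
    intro k
    induction k with
    | zero => simp
    | succ k ih =>
      rw [pow_succ', mul_assoc, ih, ← mul_assoc, hYX, mul_assoc, ← pow_succ']
  have haev : ∀ p : ℂ[X], aeval Y p * X = X * aeval (-Z) p := by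
    intro p
    induction p using Polynomial.induction_on' with
    | add p q hp hq => simp only [map_add, add_mul, mul_add, hp, hq]
    | monomial k c =>
      simp only [aeval_monomial, Algebra.algebraMap_eq_smul_one, smul_mul_assoc, one_mul,
        mul_smul_comm, hpow k]
  have hCH := haev (Matrix.charpoly (-Z))
  rw [Matrix.aeval_self_charpoly, mul_zero] at hCH
  have hdeg : 0 < (Matrix.charpoly (-Z)).degree := by
    rw [Matrix.charpoly_degree_eq_dim]
    exact_mod_cast Fintype.card_pos
  have hunit : IsUnit (aeval Y (Matrix.charpoly (-Z))) := by
    by_contra hnu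
    rw [← spectrum.zero_mem_iff (R := ℂ)] at hnu
    rw [spectrum.map_polynomial_aeval_of_degree_pos Y _ hdeg] at hnu
    obtain ⟨μ, hμ, h0⟩ := hnu
    have hm : μ ∈ spectrum ℂ (-Z) := my_mem_spectrum_of_eval h0
    rw [← spectrum.neg_eq] at hm
    have hmem : -μ ∈ spectrum ℂ Z := Set.mem_neg.mp hm
    have h1 := hZ _ hmem
    have h2 := hY _ hμ
    simp only [Complex.neg_re] at h1
    linarith
  obtain ⟨u, hu⟩ := hunit
  have hX0 : X = 0 := by
    calc X = ↑u⁻¹ * (↑u * X) := by rw [← mul_assoc, Units.inv_mul, one_mul]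
    _ = ↑u⁻¹ * ((aeval Y (Matrix.charpoly (-Z))) * X) := by rw [hu]
    _ = 0 := by rw [hCH, mul_zero]
  rw [hX, sub_eq_zero] at hX0
  exact hX0

private lemma my_posDef_of_isUnit {M : Matrix m m ℂ} (h1 : M.PosSemidef) (h2 : IsUnit M) :
    M.PosDef := by
  exact h1.posDef_iff_isUnit.mpr h2

private lemma my_sqrt_mul_self {A : Matrix m m ℂ} (hA : A.PosSemidef) :
    hA.sqrt * hA.sqrt = A := by
  have hu2 : star (hA.isHermitian.eigenvectorUnitary : Matrix m m ℂ) *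
      hA.isHermitian.eigenvectorUnitary = 1 :=
    (Matrix.mem_unitaryGroup_iff').mp hA.isHermitian.eigenvectorUnitary.2
  have hf : (fun i => ((RCLike.ofReal ∘ (√·) ∘ hA.isHermitian.eigenvalues) i : ℂ) *
      (RCLike.ofReal ∘ (√·) ∘ hA.isHermitian.eigenvalues) i) =
      RCLike.ofReal ∘ hA.isHermitian.eigenvalues := by
    funext i
    simp only [Function.comp_apply]
    exact_mod_cast Real.mul_self_sqrt (hA.eigenvalues_nonneg i)
  unfold Matrix.PosSemidef.sqrt
  conv_rhs => rw [hA.isHermitian.spectral_theorem, Unitary.conjStarAlgAut_apply]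
  simp only [Matrix.mul_assoc]
  rw [← Matrix.mul_assoc (star _) (hA.isHermitian.eigenvectorUnitary : Matrix m m ℂ), hu2,
    Matrix.one_mul, ← Matrix.mul_assoc (diagonal _), diagonal_mul_diagonal]
  exact congrArg (fun D => (hA.isHermitian.eigenvectorUnitary : Matrix m m ℂ) * (diagonal D *
    star (hA.isHermitian.eigenvectorUnitary : Matrix m m ℂ))) hf

private lemma my_isUnit_sqrt {M : Matrix m m ℂ} (hM : M.PosDef) :
    IsUnit hM.posSemidef.sqrt := by
  have hs : hM.posSemidef.sqrt * hM.posSemidef.sqrt = M := my_sqrt_mul_self hM.posSemidef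
  rw [Matrix.isUnit_iff_isUnit_det]
  have hdet : hM.posSemidef.sqrt.det * hM.posSemidef.sqrt.det = M.det := by
    rw [← Matrix.det_mul, hs]
  exact isUnit_of_mul_isUnit_left (hdet ▸ hM.det_pos.ne'.isUnit)

private lemma my_posDef_sqrt {M : Matrix m m ℂ} (hM : M.PosDef) :
    (hM.posSemidef.sqrt).PosDef :=
  my_posDef_of_isUnit hM.posSemidef.posSemidef_sqrt (my_isUnit_sqrt hM)

private lemma my_spectrum_posDef {M : Matrix m m ℂ} (hM : M.PosDef) :
    ∀ z ∈ spectrum ℂ M, 0 < z.re := by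
  intro z hz
  have h1 := hM.1.spectral_theorem
  set U := (hM.1.eigenvectorUnitary : Matrix m m ℂ) with hU
  have hu1 : U * star U = 1 := (Matrix.mem_unitaryGroup_iff).mp hM.1.eigenvectorUnitary.2
  have hu2 : star U * U = 1 := (Matrix.mem_unitaryGroup_iff').mp hM.1.eigenvectorUnitary.2
  let u : (Matrix m m ℂ)ˣ := ⟨U, star U, hu1, hu2⟩
  rw [h1, Unitary.conjStarAlgAut_apply] at hz
  have heq : (U * Matrix.diagonal (RCLike.ofReal ∘ hM.1.eigenvalues) * star U)
      = (u : Matrix m m ℂ) * Matrix.diagonal (RCLike.ofReal ∘ hM.1.eigenvalues)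
        * ((u⁻¹ : (Matrix m m ℂ)ˣ) : Matrix m m ℂ) := rfl
  rw [heq, spectrum.units_conjugate, spectrum_diagonal] at hz
  obtain ⟨i, hi⟩ := hz
  rw [← hi]
  simpa using hM.eigenvalues_pos i

private lemma my_spectrum_fromBlocks {D₁ D₂ : Matrix m m ℂ} {z : ℂ}
    (hz : z ∈ spectrum ℂ (Matrix.fromBlocks D₁ 0 0 D₂ : Matrix (m ⊕ m) (m ⊕ m) ℂ)) :
    z ∈ spectrum ℂ D₁ ∪ spectrum ℂ D₂ := by
  rw [spectrum.mem_iff, Algebra.algebraMap_eq_smul_one] at hz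
  have hb : z • (1 : Matrix (m ⊕ m) (m ⊕ m) ℂ) - Matrix.fromBlocks D₁ 0 0 D₂
      = Matrix.fromBlocks (z • 1 - D₁) 0 0 (z • 1 - D₂) := by
    rw [← Matrix.fromBlocks_one, Matrix.fromBlocks_smul, sub_eq_add_neg,
      Matrix.fromBlocks_neg, Matrix.fromBlocks_add]
    simp [sub_eq_add_neg]
  rw [hb, Matrix.isUnit_iff_isUnit_det, Matrix.det_fromBlocks_zero₂₁, isUnit_iff_ne_zero,
    not_ne_iff] at hz
  rcases mul_eq_zero.mp hz with h | h
  · left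
    rw [spectrum.mem_iff, Algebra.algebraMap_eq_smul_one, Matrix.isUnit_iff_isUnit_det,
      isUnit_iff_ne_zero, not_ne_iff]
    exact h
  · right
    rw [spectrum.mem_iff, Algebra.algebraMap_eq_smul_one, Matrix.isUnit_iff_isUnit_det,
      isUnit_iff_ne_zero, not_ne_iff]
    exact h

end Helpers

lemma geomMean_aux {n : ℕ} {A B : Matrix (Fin n) (Fin n) ℂ} (hA : A.PosDef) (hB : B.PosDef) :
    ((hA.posSemidef.sqrt)⁻¹ * B * (hA.posSemidef.sqrt)⁻¹).PosSemidef := by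
  have h := hB.posSemidef.conjTranspose_mul_mul_same (hA.posSemidef.sqrt)⁻¹
  rwa [(hA.posSemidef.posSemidef_sqrt.isHermitian.inv).eq] at h

/-- The geometric mean `A # B = A^{1/2} (A^{-1/2} B A^{-1/2})^{1/2} A^{1/2}` of two
Hermitian positive definite matrices. -/
noncomputable def geomMean {n : ℕ} {A B : Matrix (Fin n) (Fin n) ℂ}
    (hA : A.PosDef) (hB : B.PosDef) : Matrix (Fin n) (Fin n) ℂ :=
  hA.posSemidef.sqrt * (geomMean_aux hA hB).sqrt * hA.posSemidef.sqrt

/-- `sign([[0, B],[A⁻¹, 0]]) = [[0, A#B],[(A#B)⁻¹, 0]]`, where the sign of `C` is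
`C * Y⁻¹` for `Y` the principal square root of `C ^ 2`. -/
theorem sign_block_eq_geomMean {n : ℕ} {A B : Matrix (Fin n) (Fin n) ℂ}
    (hA : A.PosDef) (hB : B.PosDef)
    (C : Matrix (Fin n ⊕ Fin n) (Fin n ⊕ Fin n) ℂ)
    (hC : C = Matrix.fromBlocks 0 B A⁻¹ 0) :
    ∀ Y : Matrix (Fin n ⊕ Fin n) (Fin n ⊕ Fin n) ℂ,
      Y ^ 2 = C ^ 2 → (∀ z ∈ spectrum ℂ Y, 0 < z.re) →
      C * Y⁻¹ = Matrix.fromBlocks 0 (geomMean hA hB) ((geomMean hA hB)⁻¹) 0 := by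
  subst hC
  intro Y hY2 hYspec
  rcases Nat.eq_zero_or_pos n with rfl | hn
  · ext i j
    exact i.elim (fun a => a.elim0) (fun a => a.elim0)
  haveI : Nonempty (Fin n) := Fin.pos_iff_nonempty.mp hn
  haveI : Nonempty (Fin n ⊕ Fin n) := ⟨Sum.inl (Classical.arbitrary _)⟩
  set S := hA.posSemidef.sqrt with hSdef
  set T := (geomMean_aux hA hB).sqrt with hTdef
  have hS : S.PosDef := my_posDef_sqrt hA
  haveI : Invertible S := hS.isUnit.invertible
  have hM' : (S⁻¹ * B * S⁻¹).PosDef :=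
    my_posDef_of_isUnit (geomMean_aux hA hB) ((hS.inv.isUnit.mul hB.isUnit).mul hS.inv.isUnit)
  have hT : T.PosDef := my_posDef_sqrt hM'
  haveI : Invertible T := hT.isUnit.invertible
  have hSS : S * S = A := my_sqrt_mul_self hA.posSemidef
  have hTT : T * T = S⁻¹ * B * S⁻¹ := my_sqrt_mul_self (geomMean_aux hA hB)
  have hAinv : A⁻¹ = S⁻¹ * S⁻¹ := by rw [← hSS, Matrix.mul_inv_rev]
  have hB2 : B = S * (T * (T * S)) := by
    have h := congrArg (fun M => S * M * S) hTT
    simp only [Matrix.mul_assoc] at h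
    rw [h]
    simp only [Matrix.mul_assoc, Matrix.mul_inv_cancel_left_of_invertible,
      Matrix.inv_mul_cancel_left_of_invertible, Matrix.mul_inv_of_invertible,
      Matrix.inv_mul_of_invertible, mul_one, one_mul]
  have hG : geomMean hA hB = S * T * S := rfl
  have h1 : (S * T * S⁻¹) * (S * T * S⁻¹) = B * A⁻¹ := by
    rw [hB2, hAinv]
    simp only [Matrix.mul_assoc, Matrix.mul_inv_cancel_left_of_invertible,
      Matrix.inv_mul_cancel_left_of_invertible, Matrix.mul_inv_of_invertible,
      Matrix.inv_mul_of_invertible, mul_one, one_mul]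
  have h2 : (S⁻¹ * T * S) * (S⁻¹ * T * S) = A⁻¹ * B := by
    rw [hB2, hAinv]
    simp only [Matrix.mul_assoc, Matrix.mul_inv_cancel_left_of_invertible,
      Matrix.inv_mul_cancel_left_of_invertible, Matrix.mul_inv_of_invertible,
      Matrix.inv_mul_of_invertible, mul_one, one_mul]
  have h3 : (S * T * S⁻¹) * (S * T⁻¹ * S⁻¹) = 1 := by
    simp only [Matrix.mul_assoc, Matrix.mul_inv_cancel_left_of_invertible,
      Matrix.inv_mul_cancel_left_of_invertible, Matrix.mul_inv_of_invertible,
      Matrix.inv_mul_of_invertible, mul_one, one_mul]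
  have h4 : (S⁻¹ * T * S) * (S⁻¹ * T⁻¹ * S) = 1 := by
    simp only [Matrix.mul_assoc, Matrix.mul_inv_cancel_left_of_invertible,
      Matrix.inv_mul_cancel_left_of_invertible, Matrix.mul_inv_of_invertible,
      Matrix.inv_mul_of_invertible, mul_one, one_mul]
  have h5 : B * (S⁻¹ * T⁻¹ * S) = geomMean hA hB := by
    rw [hG, hB2]
    simp only [Matrix.mul_assoc, Matrix.mul_inv_cancel_left_of_invertible,
      Matrix.inv_mul_cancel_left_of_invertible, Matrix.mul_inv_of_invertible,
      Matrix.inv_mul_of_invertible, mul_one, one_mul]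
  have h6 : A⁻¹ * (S * T⁻¹ * S⁻¹) = (geomMean hA hB)⁻¹ := by
    rw [hG, hAinv, Matrix.mul_inv_rev, Matrix.mul_inv_rev]
    simp only [Matrix.mul_assoc, Matrix.mul_inv_cancel_left_of_invertible,
      Matrix.inv_mul_cancel_left_of_invertible, Matrix.mul_inv_of_invertible,
      Matrix.inv_mul_of_invertible, mul_one, one_mul]
  -- the candidate square root of `C ^ 2`
  set Y₀ : Matrix (Fin n ⊕ Fin n) (Fin n ⊕ Fin n) ℂ :=
    Matrix.fromBlocks (S * T * S⁻¹) 0 0 (S⁻¹ * T * S) with hY₀def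
  have hY₀sq : Y₀ ^ 2 = (Matrix.fromBlocks 0 B A⁻¹ 0 : Matrix (Fin n ⊕ Fin n) (Fin n ⊕ Fin n) ℂ) ^ 2 := by
    rw [pow_two, pow_two, hY₀def, Matrix.fromBlocks_multiply, Matrix.fromBlocks_multiply]
    rw [h1, h2]
    simp
  have hY₀spec : ∀ z ∈ spectrum ℂ Y₀, 0 < z.re := by
    intro z hz
    rcases my_spectrum_fromBlocks hz with h | h
    · have heq : S * T * S⁻¹ = (hS.isUnit.unit : Matrix (Fin n) (Fin n) ℂ) * T *
          ((hS.isUnit.unit⁻¹ : (Matrix (Fin n) (Fin n) ℂ)ˣ) : Matrix (Fin n) (Fin n) ℂ) := by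
        rw [Matrix.coe_units_inv, IsUnit.unit_spec]
      rw [heq, spectrum.units_conjugate] at h
      exact my_spectrum_posDef hT z h
    · have heq : S⁻¹ * T * S = ((hS.isUnit.unit⁻¹ : (Matrix (Fin n) (Fin n) ℂ)ˣ) :
          Matrix (Fin n) (Fin n) ℂ) * T * (hS.isUnit.unit : Matrix (Fin n) (Fin n) ℂ) := by
        rw [Matrix.coe_units_inv, IsUnit.unit_spec]
      rw [heq, spectrum.units_conjugate'] at h
      exact my_spectrum_posDef hT z h
  have hYeq : Y = Y₀ := my_sqrt_unique (hY2.trans hY₀sq.symm) hYspec hY₀spec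
  have hY₀inv : Y₀⁻¹ = Matrix.fromBlocks (S * T⁻¹ * S⁻¹) 0 0 (S⁻¹ * T⁻¹ * S) := by
    apply Matrix.inv_eq_right_inv
    rw [hY₀def, Matrix.fromBlocks_multiply, h3, h4]
    simp [Matrix.fromBlocks_one]
  rw [hYeq, hY₀inv, Matrix.fromBlocks_multiply]
  simp only [Matrix.zero_mul, Matrix.mul_zero, add_zero, zero_add]
  rw [h5, h6]
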